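/- arXiv:2110.05317 — 3 statements merged into one kernel-verified Lean document; each statement's English description precedes it below -/
import Mathlib

section
/- For every ε_0 with 0 < ε_0 < δ_0, the process {z_t} converges to zero in mean square at the weighted rate: lim_{t→∞} (t+1)^{δ_0 − ε_0} E(z_t²) = 0. -/
open MeasureTheory ProbabilityTheory Filter

lemma stmt6_aux_rate {a1 μ δ0 C : ℝ} (ha1 : 0 < a1) (hδ0 : 0 < δ0) (hδ0μ : δ0 ≤ μ)
    (hδ01 : δ0 < 1) (hμ1 : μ < 1) (hC : 0 ≤ C)
    (V : ℕ → ℝ) (hV : ∀ t, 0 ≤ V t)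
    (hc1 : ∀ t : ℕ, a1 * ((t : ℝ) + 1) ^ (-μ) ≤ 1)
    (hrec : ∀ t : ℕ, V (t+1) ≤ (1 - a1 * ((t : ℝ)+1) ^ (-μ) / 2) * V t
        + C * ((t : ℝ)+1) ^ (-(μ + δ0))) :
    ∃ K : ℝ, 0 ≤ K ∧ ∀ t : ℕ, V t ≤ K * ((t : ℝ)+1) ^ (-δ0) := by
  have htend : Tendsto (fun t : ℕ => δ0 * ((t : ℝ)+1) ^ (μ-1)) atTop (nhds 0) := by
    have h1 : Tendsto (fun x : ℝ => x ^ (-(1-μ))) atTop (nhds 0) :=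
      tendsto_rpow_neg_atTop (by linarith)
    have h2 : Tendsto (fun t : ℕ => (t : ℝ) + 1) atTop atTop :=
      tendsto_atTop_add_const_right _ 1 tendsto_natCast_atTop_atTop
    have h3 := (h1.comp h2).const_mul δ0
    simpa [mul_zero, Function.comp_def, neg_sub] using h3
  obtain ⟨t0, ht0⟩ := (Filter.eventually_atTop).mp
    (htend.eventually_le_const (show (0:ℝ) < a1/4 by linarith))
  set F : ℕ → ℝ := fun t => V t * ((t : ℝ)+1) ^ (δ0 : ℝ) with hF
  set K1 : ℝ := (Finset.range (t0+1)).sup' (by simp) F with hK1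
  set K : ℝ := max K1 (8*C/a1) with hK
  have hKnonneg : 0 ≤ K := by
    have h0 : F 0 ≤ K1 := Finset.le_sup' _ (Finset.mem_range.mpr (Nat.succ_pos t0))
    have h0' : (0:ℝ) ≤ F 0 := by
      apply mul_nonneg (hV 0) (Real.rpow_nonneg (by norm_num) _)
    exact le_trans h0' (h0.trans (le_max_left _ _))
  refine ⟨K, hKnonneg, ?_⟩
  have hbase : ∀ t : ℕ, t ≤ t0 → V t ≤ K * ((t : ℝ)+1) ^ (-δ0) := by
    intro t ht
    have hs0 : (0:ℝ) < (t : ℝ) + 1 := by positivity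
    have h1 : F t ≤ K :=
      le_trans (Finset.le_sup' _ (Finset.mem_range.mpr (Nat.lt_succ_of_le ht)))
        (le_max_left _ _)
    have h2 : (0:ℝ) < ((t : ℝ)+1) ^ (δ0 : ℝ) := Real.rpow_pos_of_pos hs0 _
    rw [Real.rpow_neg hs0.le, ← div_eq_mul_inv, le_div_iff₀ h2]
    exact h1
  have hCK : C ≤ a1 * K / 8 := by
    have h := le_max_right K1 (8*C/a1)
    rw [← hK, div_le_iff₀ ha1] at h
    linarith
  clear_value K K1
  intro t
  induction t with
  | zero => exact hbase 0 (Nat.zero_le _)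
  | succ t ih =>
    by_cases hle : t + 1 ≤ t0
    · exact hbase _ hle
    · have htt0 : t0 ≤ t := by omega
      set s : ℝ := (t : ℝ) + 1 with hs
      have hs1 : (1:ℝ) ≤ s := by simp [hs]
      have hs0 : (0:ℝ) < s := by linarith
      set e : ℝ := s ^ (-μ) with he
      have he0 : 0 < e := Real.rpow_pos_of_pos hs0 _
      have ha1e : a1 * e ≤ 1 := hc1 t
      clear_value s e
      have hy : s ^ (μ - 1) * e = s⁻¹ := by
        rw [he, ← Real.rpow_add hs0, show μ - 1 + -μ = -1 by ring, Real.rpow_neg_one]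
      have hδ0y : δ0 * s⁻¹ ≤ a1/4 * e := by
        have h4 := ht0 t htt0
        rw [← hs] at h4
        calc δ0 * s⁻¹ = (δ0 * s ^ (μ-1)) * e := by rw [mul_assoc, hy]
          _ ≤ a1/4 * e := mul_le_mul_of_nonneg_right h4 he0.le
      have hyle : s⁻¹ ≤ 1 := by
        rw [inv_le_one_iff₀]; right; exact hs1
      have hd0 : 0 ≤ δ0 * s⁻¹ := mul_nonneg hδ0.le (inv_nonneg.mpr hs0.le)
      have hd1 : δ0 * s⁻¹ ≤ 1 := by nlinarith
      have hbern : (s+1) ^ (δ0:ℝ) ≤ s ^ (δ0:ℝ) * (1 + δ0 * s⁻¹) := by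
        have h1 : s + 1 = s * (1 + s⁻¹) := by field_simp
        rw [h1, Real.mul_rpow hs0.le (by positivity)]
        apply mul_le_mul_of_nonneg_left _ (Real.rpow_nonneg hs0.le _)
        have hinv : (0:ℝ) ≤ s⁻¹ := inv_nonneg.mpr hs0.le
        have := rpow_one_add_le_one_add_mul_self (s := s⁻¹) (by linarith) hδ0.le hδ01.le
        linarith
      have hP0 : (0:ℝ) < s ^ (δ0:ℝ) := Real.rpow_pos_of_pos hs0 _
      have hQ0 : (0:ℝ) < (s+1) ^ (δ0:ℝ) := Real.rpow_pos_of_pos (by linarith) _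
      have hsplit : s ^ (-(μ + δ0)) = e * s ^ (-δ0) := by
        rw [he, ← Real.rpow_add hs0]; ring_nf
      have hPinv : s ^ (-δ0) = (s ^ (δ0:ℝ))⁻¹ := Real.rpow_neg hs0.le _
      have hQinv : (s+1) ^ (-δ0) = ((s+1) ^ (δ0:ℝ))⁻¹ := Real.rpow_neg (by linarith) _
      -- key scalar inequality
      have hmain : ((1 - a1 * e / 2) * K + C * e) * (1 + δ0 * s⁻¹) ≤ K := by
        have h1 : K * (δ0 * s⁻¹) ≤ K * (a1/4 * e) := mul_le_mul_of_nonneg_left hδ0y hKnonneg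
        have h2 : C * e ≤ a1 * K / 8 * e := mul_le_mul_of_nonneg_right hCK he0.le
        have h3 : C * e * (δ0 * s⁻¹) ≤ C * e * 1 :=
          mul_le_mul_of_nonneg_left hd1 (mul_nonneg hC he0.le)
        have h4 : 0 ≤ a1 * e / 2 * K * (δ0 * s⁻¹) := by positivity
        nlinarith [h1, h2, h3, h4]
      have hcme : 0 ≤ 1 - a1 * e / 2 := by linarith
      have step1 : V (t+1) ≤ (1 - a1 * e / 2) * (K * s ^ (-δ0)) + C * s ^ (-(μ+δ0)) := by
        have h1 := hrec t
        have h2 : (1 - a1 * e / 2) * V t ≤ (1 - a1 * e / 2) * (K * s ^ (-δ0)) :=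
          mul_le_mul_of_nonneg_left ih hcme
        rw [← hs, ← he] at h1
        linarith
      have hLnonneg : 0 ≤ (1 - a1 * e / 2) * K + C * e := by
        have h5 := mul_nonneg hC he0.le
        have h6 := mul_nonneg hcme hKnonneg
        linarith
      have step2 : (1 - a1 * e / 2) * (K * s ^ (-δ0)) + C * s ^ (-(μ+δ0))
          ≤ K * (s+1) ^ (-δ0) := by
        rw [hsplit, hPinv, hQinv]
        have hL : (1 - a1 * e / 2) * (K * (s ^ (δ0:ℝ))⁻¹) + C * (e * (s ^ (δ0:ℝ))⁻¹)
            = ((1 - a1 * e / 2) * K + C * e) * (s ^ (δ0:ℝ))⁻¹ := by ring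
        rw [hL, mul_comm K, ← div_eq_inv_mul, le_div_iff₀ hQ0]
        have hq : ((1 - a1 * e / 2) * K + C * e) * (s ^ (δ0:ℝ))⁻¹ * ((s+1) ^ (δ0:ℝ))
            ≤ ((1 - a1 * e / 2) * K + C * e) * (s ^ (δ0:ℝ))⁻¹ * (s ^ (δ0:ℝ) * (1 + δ0 * s⁻¹)) :=
          mul_le_mul_of_nonneg_left hbern (mul_nonneg hLnonneg (inv_nonneg.mpr hP0.le))
        have heq : ((1 - a1 * e / 2) * K + C * e) * (s ^ (δ0:ℝ))⁻¹ * (s ^ (δ0:ℝ) * (1 + δ0 * s⁻¹))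
            = ((1 - a1 * e / 2) * K + C * e) * (1 + δ0 * s⁻¹) := by
          field_simp
        calc ((1 - a1 * e / 2) * K + C * e) * (s ^ (δ0:ℝ))⁻¹ * ((s+1) ^ (δ0:ℝ))
            ≤ ((1 - a1 * e / 2) * K + C * e) * (1 + δ0 * s⁻¹) := by rw [← heq]; exact hq
          _ ≤ K := hmain
      rw [show ((t+1 : ℕ) : ℝ) + 1 = s + 1 by push_cast [hs]; ring]
      exact le_trans step1 step2

lemma stmt6_aux_memL2_of_add {Ω : Type} [MeasurableSpace Ω] {P : Measure Ω}
    [IsProbabilityMeasure P] {X Y : Ω → ℝ} (hX : Measurable X) (hY : Measurable Y)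
    (hind : IndepFun X Y P) (hsum : MemLp (fun ω => X ω + Y ω) 2 P) : MemLp Y 2 P := by
  have hmap : P.map (fun ω => (X ω, Y ω)) = (P.map X).prod (P.map Y) :=
    (indepFun_iff_map_prod_eq_prod_map_map hX.aemeasurable hY.aemeasurable).mp hind
  haveI : IsProbabilityMeasure (P.map X) := Measure.isProbabilityMeasure_map hX.aemeasurable
  haveI : IsProbabilityMeasure (P.map Y) := Measure.isProbabilityMeasure_map hY.aemeasurable
  have hint : Integrable (fun ω => (X ω + Y ω)^2) P := hsum.integrable_sq
  have hfin : ∫⁻ ω, ENNReal.ofReal ((X ω + Y ω)^2) ∂P < ⊤ := hint.lintegral_lt_top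
  set f : ℝ × ℝ → ENNReal := fun p => ENNReal.ofReal ((p.1 + p.2)^2) with hf
  have hfmeas : Measurable f := by
    apply ENNReal.measurable_ofReal.comp
    exact ((measurable_fst.add measurable_snd).pow_const 2)
  have key : ∫⁻ p, f p ∂((P.map X).prod (P.map Y)) < ⊤ := by
    rw [← hmap, lintegral_map hfmeas (hX.prodMk hY)]
    exact hfin
  rw [lintegral_prod _ hfmeas.aemeasurable] at key
  have hmeas_inner : Measurable fun x => ∫⁻ y, f (x, y) ∂(P.map Y) :=
    Measurable.lintegral_prod_right hfmeas
  have hae : ∀ᵐ x ∂(P.map X), (∫⁻ y, f (x, y) ∂(P.map Y)) < ⊤ := ae_lt_top hmeas_inner key.ne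
  haveI : (ae (P.map X)).NeBot := ae_neBot.mpr (IsProbabilityMeasure.ne_zero _)
  obtain ⟨x, hx⟩ := hae.exists
  have hbound : ∫⁻ y, ENNReal.ofReal (y^2) ∂(P.map Y)
      ≤ ∫⁻ y, (2 * f (x, y) + ENNReal.ofReal (2*x^2)) ∂(P.map Y) := by
    apply lintegral_mono
    intro y
    have h1 : (y:ℝ)^2 ≤ 2*(x+y)^2 + 2*x^2 := by nlinarith [sq_nonneg (2*x + y)]
    calc ENNReal.ofReal (y^2) ≤ ENNReal.ofReal (2*(x+y)^2 + 2*x^2) := ENNReal.ofReal_le_ofReal h1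
      _ = ENNReal.ofReal (2*(x+y)^2) + ENNReal.ofReal (2*x^2) :=
          ENNReal.ofReal_add (by positivity) (by positivity)
      _ = 2 * f (x, y) + ENNReal.ofReal (2*x^2) := by
          rw [hf]
          congr 1
          rw [ENNReal.ofReal_mul (by norm_num)]
          norm_num
  have hfin2 : ∫⁻ y, ENNReal.ofReal (y^2) ∂(P.map Y) < ⊤ := by
    apply lt_of_le_of_lt hbound
    have h2 : ∫⁻ y, (2 * f (x, y) + ENNReal.ofReal (2*x^2)) ∂(P.map Y)
        = 2 * (∫⁻ y, f (x, y) ∂(P.map Y)) + ENNReal.ofReal (2*x^2) := by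
      rw [lintegral_add_right _ measurable_const, lintegral_const_mul _ (by
        exact hfmeas.comp (measurable_prodMk_left))]
      simp
    rw [h2]
    exact ENNReal.add_lt_top.mpr ⟨ENNReal.mul_lt_top (by norm_num) hx, ENNReal.ofReal_lt_top⟩
  have hback : ∫⁻ ω, ENNReal.ofReal (Y ω^2) ∂P = ∫⁻ y, ENNReal.ofReal (y^2) ∂(P.map Y) := by
    rw [lintegral_map (by exact ENNReal.measurable_ofReal.comp (measurable_id.pow_const 2)) hY]
  refine (memLp_two_iff_integrable_sq hY.aestronglyMeasurable).mpr ?_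
  refine ⟨((hY.pow_const 2).aestronglyMeasurable), ?_⟩
  rw [hasFiniteIntegral_iff_ofReal (Eventually.of_forall (fun ω => sq_nonneg _))]
  rw [hback]
  exact hfin2

lemma stmt6_aux_iIndep {Ω E : Type*} [MeasurableSpace Ω] [MeasurableSpace E] {P : Measure Ω}
    (A : Ω → E) (w : ℕ → Ω → ℝ)
    (hwindep : iIndepFun w P)
    (hindep : IndepFun A (fun ω t => w t ω) P) :
    iIndep (fun o : Option ℕ => Option.elim o (MeasurableSpace.comap A inferInstance)
      (fun n => MeasurableSpace.comap (w n) inferInstance)) P := by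
  classical
  rw [iIndep_iff]
  intro s f hf
  have h' : ∀ n : ℕ, ∃ gs : Set ℝ, MeasurableSet gs ∧ (some n ∈ s → w n ⁻¹' gs = f (some n)) := by
    intro n
    by_cases hn : some n ∈ s
    · obtain ⟨gs, h1, h2⟩ := MeasurableSpace.measurableSet_comap.mp (hf (some n) hn)
      exact ⟨gs, h1, fun _ => h2⟩
    · exact ⟨Set.univ, MeasurableSet.univ, fun h => absurd h hn⟩
  choose g hg1 hg2 using h'
  have hWfact : P (⋂ n ∈ s.eraseNone, w n ⁻¹' g n) = ∏ n ∈ s.eraseNone, P (w n ⁻¹' g n) :=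
    hwindep.meas_biInter (fun i _ => ⟨g i, hg1 i, rfl⟩)
  have hIcap : (⋂ n ∈ s.eraseNone, w n ⁻¹' g n) = ⋂ n ∈ s.eraseNone, f (some n) :=
    Set.iInter₂_congr fun n hn => hg2 n (Finset.mem_eraseNone.mp hn)
  have hprod_some : ∏ n ∈ s.eraseNone, P (f (some n)) = ∏ n ∈ s.eraseNone, P (w n ⁻¹' g n) := by
    refine Finset.prod_congr rfl fun n hn => ?_
    rw [hg2 n (Finset.mem_eraseNone.mp hn)]
  by_cases hnone : none ∈ s
  · obtain ⟨sA, hsA, hfA⟩ := MeasurableSpace.measurableSet_comap.mp (hf none hnone)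
    have hsplit : ⋂ i ∈ s, f i = f none ∩ ⋂ n ∈ s.eraseNone, f (some n) := by
      ext x
      simp only [Set.mem_iInter, Set.mem_inter_iff, Finset.mem_eraseNone]
      constructor
      · exact fun h => ⟨h none hnone, fun n hn => h (some n) hn⟩
      · rintro ⟨h0, h1⟩ (_|n) hi
        · exact h0
        · exact h1 n hi
    have hpre : (⋂ n ∈ s.eraseNone, w n ⁻¹' g n)
        = (fun ω t => w t ω) ⁻¹' (⋂ n ∈ s.eraseNone, (fun x : ℕ → ℝ => x n) ⁻¹' g n) := by
      ext ω; simp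
    have hCmeas : MeasurableSet (⋂ n ∈ s.eraseNone, (fun x : ℕ → ℝ => x n) ⁻¹' g n) :=
      Set.Finite.measurableSet_biInter (Finset.finite_toSet _)
        (fun n _ => (measurable_pi_apply n) (hg1 n))
    have hmain := hindep.measure_inter_preimage_eq_mul sA _ hsA hCmeas
    have hRHS : ∏ i ∈ s, P (f i) = P (f none) * ∏ n ∈ s.eraseNone, P (f (some n)) := by
      rw [← Finset.mul_prod_erase s _ hnone]
      congr 1
      rw [← Finset.map_some_eraseNone s, Finset.prod_map]
      rfl
    rw [hsplit, hRHS, ← hIcap, hpre, ← hfA, hmain, hfA, ← hpre, hWfact, hprod_some]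
  · have hsplit : ⋂ i ∈ s, f i = ⋂ n ∈ s.eraseNone, f (some n) := by
      ext x
      simp only [Set.mem_iInter, Finset.mem_eraseNone]
      constructor
      · exact fun h n hn => h (some n) hn
      · rintro h (_|n) hi
        · exact absurd hi hnone
        · exact h n hi
    have hRHS : ∏ i ∈ s, P (f i) = ∏ n ∈ s.eraseNone, P (f (some n)) := by
      conv_lhs => rw [← Finset.erase_eq_of_notMem hnone, ← Finset.map_some_eraseNone s,
        Finset.prod_map]
      rfl
    rw [hsplit, hRHS, ← hIcap, hWfact, hprod_some]


set_option maxHeartbeats 2000000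

/-- Weighted mean-square convergence: for every `0 < ε0 < δ0`,
`(t+1)^{δ0 − ε0} · E(z_t²) → 0` as `t → ∞`. -/
theorem stmt_6 {Ω : Type} [MeasurableSpace Ω] (P : Measure Ω) [IsProbabilityMeasure P]
    -- i.i.d. noise, mean zero, variance σ² < ∞
    (w : ℕ → Ω → ℝ) (hwmeas : ∀ t, Measurable (w t))
    (hwiid : ∀ t, IdentDistrib (w t) (w 0) P P)
    (hwindep : iIndepFun w P)
    (σ2 : ℝ) (hwmean : ∀ t, ∫ ω, w t ω ∂P = 0)
    (hwvar : ∀ t, ∫ ω, (w t ω) ^ 2 ∂P = σ2)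
    -- square-integrable initial condition
    (z0 : Ω → ℝ) (hz0meas : Measurable z0)
    (hz0L2 : Integrable (fun ω => (z0 ω) ^ 2) P)
    -- a.s. bounded perturbations
    (a2 δ : ℝ) (ha2 : 0 < a2) (hδ : 0 < δ)
    (r2 : ℕ → Ω → ℝ) (hr2meas : ∀ t, Measurable (r2 t))
    (hr2 : ∀ t, ∀ᵐ ω ∂P, |r2 t ω| ≤ a2 * ((t : ℝ) + 1) ^ (-δ))
    -- (z0, r2) independent of the noise sequence
    (hindep : IndepFun (fun ω => (z0 ω, fun t => r2 t ω)) (fun ω t => w t ω) P)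
    -- deterministic gains
    (a1 μ : ℝ) (ha1 : 0 < a1) (hr1 : ∀ t : ℕ, a1 * ((t : ℝ) + 1) ^ (-μ) ≤ 1)
    -- exponents
    (δ0 : ℝ)
    (hδ0 : (1 ≤ δ ∧ 0 < δ0 ∧ δ0 < 1 ∧ μ = δ0) ∨ (δ < 1 ∧ δ0 = δ ∧ δ ≤ μ ∧ μ < 1))
    -- the process
    (z : ℕ → Ω → ℝ) (hzinit : z 0 = z0)
    (hz : ∀ t ω, z (t + 1) ω = (1 - a1 * ((t : ℝ) + 1) ^ (-μ)) * z t ω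
        + a1 * ((t : ℝ) + 1) ^ (-μ) * (r2 t ω + w t ω)) :
    ∀ ε0 : ℝ, 0 < ε0 → ε0 < δ0 →
      Tendsto (fun t : ℕ => ((t : ℝ) + 1) ^ (δ0 - ε0) * ∫ ω, (z t ω) ^ 2 ∂P)
        atTop (nhds 0) := by
  intro ε0 hε0 hε0δ0
  -- exponent bookkeeping
  have hδ0pos : 0 < δ0 := by rcases hδ0 with ⟨_, h, _, _⟩ | ⟨_, h, _, _⟩ <;> [exact h; (rw [h]; exact hδ)]
  have hδ0lt1 : δ0 < 1 := by rcases hδ0 with ⟨_, _, h, _⟩ | ⟨h1, h2, _, _⟩ <;> [exact h; (rw [h2]; exact h1)]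
  have hδ0μ : δ0 ≤ μ := by rcases hδ0 with ⟨_, _, _, h⟩ | ⟨_, h2, h3, _⟩ <;> [(rw [h]); (rw [h2]; exact h3)]
  have hμ1 : μ < 1 := by rcases hδ0 with ⟨_, _, h3, h4⟩ | ⟨_, _, _, h⟩ <;> [(rw [h4]; exact h3); exact h]
  have hδ0δ : δ0 ≤ δ := by rcases hδ0 with ⟨h1, _, h3, _⟩ | ⟨_, h2, _, _⟩ <;> [linarith; (rw [h2])]
  -- the gains
  set c : ℕ → ℝ := fun t => a1 * ((t : ℝ) + 1) ^ (-μ) with hc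
  have hs0 : ∀ t : ℕ, (0:ℝ) < (t : ℝ) + 1 := fun t => by positivity
  have hcpos : ∀ t, 0 < c t := fun t => mul_pos ha1 (Real.rpow_pos_of_pos (hs0 t) _)
  have hcle : ∀ t, c t ≤ 1 := fun t => hr1 t
  -- measurability of the process
  have hzmeas : ∀ t, Measurable (z t) := by
    intro t
    induction t with
    | zero => rw [hzinit]; exact hz0meas
    | succ t ih =>
      have hrep : z (t+1) = fun ω => (1 - c t) * z t ω + c t * (r2 t ω + w t ω) :=
        funext (fun ω => hz t ω)
      rw [hrep]
      exact (ih.const_mul _).add (((hr2meas t).add (hwmeas t)).const_mul _)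
  -- independence machinery
  set A : Ω → ℝ × (ℕ → ℝ) := fun ω => (z0 ω, fun s => r2 s ω) with hA
  have hAmeas : Measurable A := hz0meas.prodMk (measurable_pi_lambda _ (fun s => hr2meas s))
  set 𝔪 : Option ℕ → MeasurableSpace Ω := fun o => Option.elim o
    (MeasurableSpace.comap A inferInstance)
    (fun n => MeasurableSpace.comap (w n) inferInstance) with h𝔪
  have h𝔪le : ∀ o, 𝔪 o ≤ ‹MeasurableSpace Ω› := by
    rintro (_|n)
    · exact measurable_iff_comap_le.mp hAmeas
    · exact measurable_iff_comap_le.mp (hwmeas n)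
  have hiI : iIndep 𝔪 P := stmt6_aux_iIndep A w hwindep hindep
  have hIndep_t : ∀ t : ℕ, Indep (⨆ i ∈ ({some t}ᶜ : Set (Option ℕ)), 𝔪 i) (𝔪 (some t)) P := by
    intro t
    have h := indep_biSup_compl h𝔪le hiI ({some t}ᶜ)
    rw [compl_compl] at h
    simpa using h
  -- past σ-algebras
  set N : ℕ → MeasurableSpace Ω := fun t =>
    ⨆ i ∈ (insert none (some '' {s : ℕ | s < t}) : Set (Option ℕ)), 𝔪 i with hN
  have hNmono : ∀ t, N t ≤ N (t+1) := by
    intro t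
    apply biSup_mono
    apply Set.insert_subset_insert
    exact Set.image_mono (fun s hs => Nat.lt_succ_of_lt hs)
  have hNle : ∀ t, N t ≤ ⨆ i ∈ ({some t}ᶜ : Set (Option ℕ)), 𝔪 i := by
    intro t
    apply biSup_mono
    rintro (_|n) hi
    · simp
    · simp only [Set.mem_insert_iff, Set.mem_image, Set.mem_setOf_eq] at hi
      rcases hi with h | ⟨m, hm, hmn⟩
      · exact absurd h (by simp)
      · cases hmn
        simp only [Set.mem_compl_iff, Set.mem_singleton_iff]
        intro hcontr
        rw [Option.some_inj] at hcontr
        omega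
  have h𝔪none_le : ∀ t, 𝔪 none ≤ N t := fun t => le_biSup _ (Set.mem_insert _ _)
  have h𝔪some_le : ∀ s t : ℕ, s < t → 𝔪 (some s) ≤ N t := fun s t hst =>
    le_biSup _ (Set.mem_insert_of_mem _ ⟨s, hst, rfl⟩)
  have hz0N : Measurable[𝔪 none] z0 :=
    measurable_fst.comp (comap_measurable A)
  have hr2N : ∀ s : ℕ, Measurable[𝔪 none] (r2 s) := fun s =>
    ((measurable_pi_apply s).comp measurable_snd).comp (comap_measurable A)
  have hwN : ∀ s : ℕ, Measurable[𝔪 (some s)] (w s) := fun s =>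
    comap_measurable (w s)
  have hzN : ∀ t, Measurable[N t] (z t) := by
    intro t
    induction t with
    | zero =>
      rw [hzinit]
      exact hz0N.mono (h𝔪none_le 0) le_rfl
    | succ t ih =>
      have hrep : z (t+1) = fun ω => (1 - c t) * z t ω + c t * (r2 t ω + w t ω) :=
        funext (fun ω => hz t ω)
      rw [hrep]
      have h1 : Measurable[N (t+1)] (z t) := ih.mono (hNmono t) le_rfl
      have h2 : Measurable[N (t+1)] (r2 t) := (hr2N t).mono (h𝔪none_le (t+1)) le_rfl
      have h3 : Measurable[N (t+1)] (w t) := (hwN t).mono (h𝔪some_le t (t+1) (Nat.lt_succ_self t)) le_rfl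
      exact (h1.const_mul _).add ((h2.add h3).const_mul _)
  -- the pair (z t, r2 t) is independent of w t
  have hZRW : ∀ t : ℕ, IndepFun (fun ω => (z t ω, r2 t ω)) (w t) P := by
    intro t
    have hpair : Measurable[⨆ i ∈ ({some t}ᶜ : Set (Option ℕ)), 𝔪 i]
        (fun ω => (z t ω, r2 t ω)) := by
      apply Measurable.prodMk
      · exact (hzN t).mono (hNle t) le_rfl
      · exact ((hr2N t).mono ((h𝔪none_le t).trans (hNle t)) le_rfl)
    have h1 : MeasurableSpace.comap (fun ω => (z t ω, r2 t ω)) inferInstance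
        ≤ ⨆ i ∈ ({some t}ᶜ : Set (Option ℕ)), 𝔪 i := measurable_iff_comap_le.mp hpair
    have h2 := indep_of_indep_of_le_left (hIndep_t t) h1
    rw [IndepFun_iff_Indep]
    exact h2
  -- the drift part
  set Y : ℕ → Ω → ℝ := fun t ω => (1 - c t) * z t ω + c t * r2 t ω with hY
  have hYmeas : ∀ t, Measurable (Y t) := fun t =>
    ((hzmeas t).const_mul _).add ((hr2meas t).const_mul _)
  have hYW : ∀ t, IndepFun (Y t) (w t) P := by
    intro t
    have hφ : Measurable (fun p : ℝ × ℝ => (1 - c t) * p.1 + c t * p.2) :=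
      (measurable_fst.const_mul _).add (measurable_snd.const_mul _)
    have := (hZRW t).comp hφ measurable_id
    exact this
  have hzsucc : ∀ t ω, z (t+1) ω = Y t ω + c t * w t ω := by
    intro t ω
    rw [hz t ω, hY]
    show _ = (1 - c t) * z t ω + c t * r2 t ω + c t * w t ω
    rw [hc]
    ring
  by_cases hL2 : MemLp (w 0) 2 P
  · -- main branch
    have hw2 : ∀ t, MemLp (w t) 2 P := fun t => (hwiid t).symm.memLp_snd hL2
    have hwInt : ∀ t, Integrable (w t) P := fun t => (hw2 t).integrable one_le_two
    have hr2mem : ∀ t, MemLp (r2 t) 2 P := by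
      intro t
      refine MemLp.of_bound (hr2meas t).aestronglyMeasurable (a2 * ((t:ℝ)+1) ^ (-δ)) ?_
      filter_upwards [hr2 t] with ω h
      rwa [Real.norm_eq_abs]
    have hz2 : ∀ t, MemLp (z t) 2 P := by
      intro t
      induction t with
      | zero =>
        rw [hzinit]
        exact (memLp_two_iff_integrable_sq hz0meas.aestronglyMeasurable).mpr hz0L2
      | succ t ih =>
        have hrep : z (t+1) = fun ω => (1 - c t) * z t ω + c t * (r2 t ω + w t ω) :=
          funext (fun ω => hz t ω)
        rw [hrep]
        exact (ih.const_mul _).add (((hr2mem t).add (hw2 t)).const_mul _)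
    have hmul : ∀ (f g : Ω → ℝ), MemLp f 2 P → MemLp g 2 P →
        Integrable (fun ω => f ω * g ω) P := by
      intro f g hf hg
      have hfg : AEStronglyMeasurable (fun ω => f ω * g ω) P := hf.1.mul hg.1
      have hbd : Integrable (fun ω => (f ω^2 + g ω^2)/2) P :=
        (hf.integrable_sq.add hg.integrable_sq).div_const 2
      refine hbd.mono' hfg ?_
      filter_upwards with ω
      rw [Real.norm_eq_abs, abs_mul]
      nlinarith [sq_nonneg (|f ω| - |g ω|), sq_abs (f ω), sq_abs (g ω),
        abs_nonneg (f ω), abs_nonneg (g ω)]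
    have hYmem : ∀ t, MemLp (Y t) 2 P := fun t =>
      ((hz2 t).const_mul _).add ((hr2mem t).const_mul _)
    have hσ2 : 0 ≤ σ2 := by
      rw [← hwvar 0]
      exact integral_nonneg (fun ω => sq_nonneg _)
    have hcross : ∀ t, ∫ ω, Y t ω * w t ω ∂P = 0 := by
      intro t
      have h := (hYW t).integral_mul_eq_mul_integral ((hYmem t).integrable one_le_two).aestronglyMeasurable (hwInt t).aestronglyMeasurable
      rw [hwmean t, mul_zero] at h
      exact h
    set V : ℕ → ℝ := fun t => ∫ ω, (z t ω)^2 ∂P with hV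
    have hVnn : ∀ t, 0 ≤ V t := fun t => integral_nonneg (fun ω => sq_nonneg _)
    set C : ℝ := 2*a1*a2^2 + a1^2*σ2 with hCdef
    have hCnn : 0 ≤ C := by positivity
    have hrec : ∀ t : ℕ, V (t+1) ≤ (1 - a1 * ((t : ℝ)+1) ^ (-μ) / 2) * V t
        + C * ((t : ℝ)+1) ^ (-(μ + δ0)) := by
      intro t
      have hs1 : (1:ℝ) ≤ (t:ℝ)+1 := by
        have : (0:ℝ) ≤ (t:ℝ) := Nat.cast_nonneg t
        linarith
      have hY2int : Integrable (fun ω => Y t ω^2) P := (hYmem t).integrable_sq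
      have hYwint : Integrable (fun ω => Y t ω * w t ω) P := hmul _ _ (hYmem t) (hw2 t)
      have hw2int : Integrable (fun ω => w t ω^2) P := (hw2 t).integrable_sq
      have hids : V (t+1) = ∫ ω, (Y t ω^2 + ((2*c t) * (Y t ω * w t ω)
          + (c t)^2 * (w t ω^2))) ∂P := by
        show (∫ ω, (z (t+1) ω)^2 ∂P) = _
        congr 1
        funext ω
        rw [hzsucc t ω]
        ring
      have hadd1 : Integrable (fun ω => (2*c t) * (Y t ω * w t ω)
          + (c t)^2 * (w t ω^2)) P := (hYwint.const_mul _).add (hw2int.const_mul _)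
      have hsum : V (t+1) = (∫ ω, Y t ω^2 ∂P) + ((2*c t) * ∫ ω, Y t ω * w t ω ∂P
          + (c t)^2 * ∫ ω, w t ω^2 ∂P) := by
        rw [hids, integral_add hY2int hadd1,
          integral_add (hYwint.const_mul _) (hw2int.const_mul _),
          integral_const_mul, integral_const_mul]
      rw [hsum, hcross t, hwvar t, mul_zero, zero_add]
      -- bound the drift square integral
      have hY2le : ∫ ω, Y t ω^2 ∂P ≤ (1 - c t/2) * V t
          + 2 * c t * (a2 * ((t:ℝ)+1)^(-δ))^2 := by
        have hrhsint : Integrable (fun ω => (1 - c t/2) * z t ω^2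
            + 2 * c t * (a2*((t:ℝ)+1)^(-δ))^2) P :=
          ((hz2 t).integrable_sq.const_mul _).add (integrable_const _)
        have hptw : ∀ᵐ ω ∂P, Y t ω^2 ≤ (1 - c t/2) * z t ω^2
            + 2 * c t * (a2*((t:ℝ)+1)^(-δ))^2 := by
          filter_upwards [hr2 t] with ω hω
          have h1 : r2 t ω^2 ≤ (a2*((t:ℝ)+1)^(-δ))^2 := by
            nlinarith [abs_nonneg (r2 t ω), sq_abs (r2 t ω)]
          have hcp := hcpos t
          have hcl := hcle t
          have e1 : 0 ≤ c t * (1 - c t) * (z t ω - r2 t ω)^2 :=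
            mul_nonneg (mul_nonneg hcp.le (by linarith)) (sq_nonneg _)
          have e2 : 0 ≤ c t * (z t ω)^2 := mul_nonneg hcp.le (sq_nonneg _)
          have e3 : 0 ≤ c t * (r2 t ω)^2 := mul_nonneg hcp.le (sq_nonneg _)
          have e4 : 0 ≤ 2 * c t * ((a2*((t:ℝ)+1)^(-δ))^2 - r2 t ω^2) :=
            mul_nonneg (by linarith) (by linarith)
          show ((1 - c t) * z t ω + c t * r2 t ω)^2 ≤ _
          nlinarith [e1, e2, e3, e4]
        calc ∫ ω, Y t ω^2 ∂P
            ≤ ∫ ω, ((1 - c t/2) * z t ω^2 + 2 * c t * (a2*((t:ℝ)+1)^(-δ))^2) ∂P :=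
              integral_mono_ae hY2int hrhsint hptw
          _ = (1 - c t/2) * V t + 2 * c t * (a2*((t:ℝ)+1)^(-δ))^2 := by
              rw [integral_add ((hz2 t).integrable_sq.const_mul _) (integrable_const _),
                integral_const_mul, integral_const]
              simp [hV, measure_univ]
      have hrpow1 : 2 * c t * (a2 * ((t:ℝ)+1)^(-δ))^2
          ≤ 2*a1*a2^2 * ((t:ℝ)+1)^(-(μ+δ0)) := by
        have hmm : ((t:ℝ)+1)^(-μ) * (((t:ℝ)+1)^(-δ) * ((t:ℝ)+1)^(-δ))
            = ((t:ℝ)+1)^(-(μ+2*δ)) := by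
          rw [← Real.rpow_add (hs0 t), ← Real.rpow_add (hs0 t)]
          congr 1
          ring
        have hle : ((t:ℝ)+1)^(-(μ+2*δ)) ≤ ((t:ℝ)+1)^(-(μ+δ0)) :=
          Real.rpow_le_rpow_of_exponent_le hs1 (by linarith)
        calc 2 * c t * (a2 * ((t:ℝ)+1)^(-δ))^2
            = 2*a1*a2^2 * (((t:ℝ)+1)^(-μ) * (((t:ℝ)+1)^(-δ) * ((t:ℝ)+1)^(-δ))) := by
              rw [hc]
              ring
          _ = 2*a1*a2^2 * ((t:ℝ)+1)^(-(μ+2*δ)) := by rw [hmm]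
          _ ≤ 2*a1*a2^2 * ((t:ℝ)+1)^(-(μ+δ0)) :=
              mul_le_mul_of_nonneg_left hle (by positivity)
      have hrpow2 : (c t)^2 * σ2 ≤ a1^2*σ2 * ((t:ℝ)+1)^(-(μ+δ0)) := by
        have hmm : ((t:ℝ)+1)^(-μ) * ((t:ℝ)+1)^(-μ) = ((t:ℝ)+1)^(-(μ+μ)) := by
          rw [← Real.rpow_add (hs0 t)]
          congr 1
          ring
        have hle : ((t:ℝ)+1)^(-(μ+μ)) ≤ ((t:ℝ)+1)^(-(μ+δ0)) :=
          Real.rpow_le_rpow_of_exponent_le hs1 (by linarith)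
        calc (c t)^2 * σ2 = (((t:ℝ)+1)^(-μ) * ((t:ℝ)+1)^(-μ)) * (a1^2 * σ2) := by
              rw [hc]
              ring
          _ = ((t:ℝ)+1)^(-(μ+μ)) * (a1^2 * σ2) := by rw [hmm]
          _ ≤ ((t:ℝ)+1)^(-(μ+δ0)) * (a1^2 * σ2) :=
              mul_le_mul_of_nonneg_right hle (mul_nonneg (sq_nonneg a1) hσ2)
          _ = a1^2*σ2 * ((t:ℝ)+1)^(-(μ+δ0)) := by ring
      have hfinal : 2 * c t * (a2 * ((t:ℝ)+1)^(-δ))^2 + (c t)^2 * σ2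
          ≤ C * ((t : ℝ)+1) ^ (-(μ + δ0)) := by
        have hx : C * ((t : ℝ)+1) ^ (-(μ + δ0)) = 2*a1*a2^2 * ((t:ℝ)+1)^(-(μ+δ0))
            + a1^2*σ2 * ((t:ℝ)+1)^(-(μ+δ0)) := by rw [hCdef]; ring
        rw [hx]
        exact add_le_add hrpow1 hrpow2
      have hceq : 1 - c t / 2 = 1 - a1 * ((t : ℝ)+1) ^ (-μ) / 2 := by rw [hc]
      rw [← hceq]
      linarith [hY2le, hfinal]
    obtain ⟨K, hK0, hKb⟩ := stmt6_aux_rate ha1 hδ0pos hδ0μ hδ0lt1 hμ1 hCnn V hVnn hr1 hrec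
    have hub : ∀ t : ℕ, ((t:ℝ)+1)^(δ0-ε0) * V t ≤ K * ((t:ℝ)+1)^(-ε0) := by
      intro t
      have h2 : ((t:ℝ)+1)^(δ0-ε0) * V t ≤ ((t:ℝ)+1)^(δ0-ε0) * (K * ((t:ℝ)+1)^(-δ0)) :=
        mul_le_mul_of_nonneg_left (hKb t) (Real.rpow_nonneg (hs0 t).le _)
      calc ((t:ℝ)+1)^(δ0-ε0) * V t ≤ ((t:ℝ)+1)^(δ0-ε0) * (K * ((t:ℝ)+1)^(-δ0)) := h2
        _ = K * (((t:ℝ)+1)^(δ0-ε0) * ((t:ℝ)+1)^(-δ0)) := by ring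
        _ = K * ((t:ℝ)+1)^(-ε0) := by
            rw [← Real.rpow_add (hs0 t)]
            congr 1
            ring
    have hlb : ∀ t : ℕ, 0 ≤ ((t:ℝ)+1)^(δ0-ε0) * V t := fun t =>
      mul_nonneg (Real.rpow_nonneg (hs0 t).le _) (hVnn t)
    have htendK : Tendsto (fun t : ℕ => K * ((t:ℝ)+1)^(-ε0)) atTop (nhds 0) := by
      have h1 : Tendsto (fun x : ℝ => x ^ (-ε0)) atTop (nhds 0) := tendsto_rpow_neg_atTop hε0
      have h2 : Tendsto (fun t : ℕ => (t:ℝ)+1) atTop atTop :=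
        tendsto_atTop_add_const_right _ 1 tendsto_natCast_atTop_atTop
      have h3 := (h1.comp h2).const_mul K
      simpa [Function.comp_def] using h3
    exact tendsto_of_tendsto_of_tendsto_of_le_of_le tendsto_const_nhds htendK hlb hub
  · -- noise not square integrable: all integrals vanish for t ≥ 1
    have hzero : ∀ t : ℕ, ∫ ω, (z (t+1) ω)^2 ∂P = 0 := by
      intro t
      apply integral_undef
      intro hint
      apply hL2
      have hmem : MemLp (z (t+1)) 2 P :=
        (memLp_two_iff_integrable_sq (hzmeas (t+1)).aestronglyMeasurable).mpr hint
      have hmem' : MemLp (fun ω => Y t ω + c t * w t ω) 2 P := by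
        have : z (t+1) = fun ω => Y t ω + c t * w t ω := funext (hzsucc t)
        rwa [this] at hmem
      have hcw : MemLp (fun ω => c t * w t ω) 2 P := by
        refine stmt6_aux_memL2_of_add (hYmeas t) ((hwmeas t).const_mul _) ?_ hmem'
        have := (hYW t).comp measurable_id (measurable_id.const_mul (c t))
        exact this
      have hw2 : MemLp (w t) 2 P := by
        have h2 := hcw.const_mul (c t)⁻¹
        have h3 : (fun ω => (c t)⁻¹ * (c t * w t ω)) = w t := by
          funext ω
          rw [← mul_assoc, inv_mul_cancel₀ (ne_of_gt (hcpos t)), one_mul]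
        rwa [h3] at h2
      exact (hwiid t).memLp_snd hw2
    have hev : ∀ᶠ t : ℕ in atTop, (0:ℝ) = ((t : ℝ) + 1) ^ (δ0 - ε0) * ∫ ω, (z t ω) ^ 2 ∂P := by
      rw [eventually_atTop]
      refine ⟨1, fun t ht => ?_⟩
      obtain ⟨k, rfl⟩ := Nat.exists_eq_add_of_le ht
      rw [show 1 + k = k + 1 by ring, hzero k, mul_zero]
    exact Tendsto.congr' hev tendsto_const_nhds
end

section
/- There exist constants c_2, c_3 > 0 and a time T such that for all t ≥ T the second moments of the process satisfy the recursive inequality E(z_{t+1}²) ≤ (1 − c_2/(t+1)^μ) E(z_t²) + c_3/(t+1)^{μ + δ_0}. -/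
open MeasureTheory ProbabilityTheory Filter

lemma aux_norm_sq (x : ℝ) : ‖x ^ 2‖ = x ^ 2 := by
  rw [Real.norm_eq_abs]; exact abs_of_nonneg (sq_nonneg x)

lemma aux_pick {Ω α β : Type*} [MeasurableSpace Ω] [MeasurableSpace α] [MeasurableSpace β]
    (P : Measure Ω) [IsProbabilityMeasure P] {X : Ω → α} {Y : Ω → β}
    (hX : Measurable X) (hY : Measurable Y) (h : IndepFun X Y P)
    {F : α → β → ℝ} (hF : Measurable (Function.uncurry F))
    (hint : Integrable (fun ω => F (X ω) (Y ω)) P) :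
    ∃ a, Integrable (fun ω => F a (Y ω)) P := by
  have hmap := (indepFun_iff_map_prod_eq_prod_map_map hX.aemeasurable hY.aemeasurable).mp h
  have h1 : Integrable (Function.uncurry F) (Measure.map (fun ω => (X ω, Y ω)) P) := by
    rw [integrable_map_measure hF.aestronglyMeasurable (hX.prodMk hY).aemeasurable]
    exact hint
  rw [hmap] at h1
  have h2 := h1.prod_right_ae
  have : IsProbabilityMeasure (P.map X) := Measure.isProbabilityMeasure_map hX.aemeasurable
  obtain ⟨a, ha⟩ := h2.exists
  refine ⟨a, ?_⟩
  have hFa : Measurable (F a) := hF.comp measurable_prodMk_left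
  exact (integrable_map_measure hFa.aestronglyMeasurable hY.aemeasurable).mp ha

lemma aux_mul_int {Ω : Type*} [MeasurableSpace Ω] {P : Measure Ω}
    {f g : Ω → ℝ} (hf : AEStronglyMeasurable f P) (hg : AEStronglyMeasurable g P)
    (hf2 : Integrable (fun ω => f ω ^ 2) P) (hg2 : Integrable (fun ω => g ω ^ 2) P) :
    Integrable (fun ω => f ω * g ω) P := by
  refine Integrable.mono' (hf2.add hg2) (hf.mul hg) ?_
  refine Filter.Eventually.of_forall fun ω => ?_
  have h1 : ‖f ω * g ω‖ = |f ω| * |g ω| := by rw [Real.norm_eq_abs, abs_mul]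
  rw [h1]
  simp only [Pi.add_apply]
  nlinarith [sq_nonneg (|f ω| - |g ω|), sq_abs (f ω), sq_abs (g ω), abs_nonneg (f ω),
    abs_nonneg (g ω)]

lemma aux_int_of_sq {Ω : Type*} [MeasurableSpace Ω] {P : Measure Ω} [IsProbabilityMeasure P]
    {f : Ω → ℝ} (hf : AEStronglyMeasurable f P)
    (hf2 : Integrable (fun ω => f ω ^ 2) P) : Integrable f P := by
  refine Integrable.mono' ((integrable_const 1).add hf2) hf ?_
  refine Filter.Eventually.of_forall fun ω => ?_
  rw [Real.norm_eq_abs]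
  simp only [Pi.add_apply]
  nlinarith [sq_nonneg (|f ω| - 1), sq_abs (f ω)]

set_option maxHeartbeats 2000000 in
/-- There exist constants `c2, c3 > 0` and a time `T` such that for all `t ≥ T`
the second moments satisfy
`E(z_{t+1}²) ≤ (1 − c2/(t+1)^μ) E(z_t²) + c3/(t+1)^{μ+δ0}`. -/
theorem stmt_8 {Ω : Type} [MeasurableSpace Ω] (P : Measure Ω) [IsProbabilityMeasure P]
    -- i.i.d. noise, mean zero, variance σ² < ∞
    (w : ℕ → Ω → ℝ) (hwmeas : ∀ t, Measurable (w t))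
    (hwiid : ∀ t, IdentDistrib (w t) (w 0) P P)
    (hwindep : iIndepFun w P)
    (σ2 : ℝ) (hwmean : ∀ t, ∫ ω, w t ω ∂P = 0)
    (hwvar : ∀ t, ∫ ω, (w t ω) ^ 2 ∂P = σ2)
    -- square-integrable initial condition
    (z0 : Ω → ℝ) (hz0meas : Measurable z0)
    (hz0L2 : Integrable (fun ω => (z0 ω) ^ 2) P)
    -- a.s. bounded perturbations
    (a2 δ : ℝ) (ha2 : 0 < a2) (hδ : 0 < δ)
    (r2 : ℕ → Ω → ℝ) (hr2meas : ∀ t, Measurable (r2 t))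
    (hr2 : ∀ t, ∀ᵐ ω ∂P, |r2 t ω| ≤ a2 * ((t : ℝ) + 1) ^ (-δ))
    -- (z0, r2) independent of the noise sequence
    (hindep : IndepFun (fun ω => (z0 ω, fun t => r2 t ω)) (fun ω t => w t ω) P)
    -- deterministic gains
    (a1 μ : ℝ) (ha1 : 0 < a1) (hr1 : ∀ t : ℕ, a1 * ((t : ℝ) + 1) ^ (-μ) ≤ 1)
    -- exponents
    (δ0 : ℝ)
    (hδ0 : (1 ≤ δ ∧ 0 < δ0 ∧ δ0 < 1 ∧ μ = δ0) ∨ (δ < 1 ∧ δ0 = δ ∧ δ ≤ μ ∧ μ < 1))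
    -- the process
    (z : ℕ → Ω → ℝ) (hzinit : z 0 = z0)
    (hz : ∀ t ω, z (t + 1) ω = (1 - a1 * ((t : ℝ) + 1) ^ (-μ)) * z t ω
        + a1 * ((t : ℝ) + 1) ^ (-μ) * (r2 t ω + w t ω)) :
    ∃ c2 c3 : ℝ, 0 < c2 ∧ 0 < c3 ∧ ∃ T : ℕ, ∀ t ≥ T,
      (∫ ω, (z (t + 1) ω) ^ 2 ∂P) ≤
        (1 - c2 / ((t : ℝ) + 1) ^ μ) * (∫ ω, (z t ω) ^ 2 ∂P)
          + c3 / ((t : ℝ) + 1) ^ (μ + δ0) := by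
  -- basic exponent facts
  have hμpos : 0 < μ := by rcases hδ0 with ⟨h1, h2, h3, h4⟩ | ⟨h1, h2, h3, h4⟩ <;> linarith
  have hδ0pos : 0 < δ0 := by rcases hδ0 with ⟨h1, h2, h3, h4⟩ | ⟨h1, h2, h3, h4⟩ <;> linarith
  have hδ0μ : δ0 ≤ μ := by rcases hδ0 with ⟨h1, h2, h3, h4⟩ | ⟨h1, h2, h3, h4⟩ <;> linarith
  have hδ0δ : δ0 ≤ δ := by rcases hδ0 with ⟨h1, h2, h3, h4⟩ | ⟨h1, h2, h3, h4⟩ <;> linarith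
  have hp1 : ∀ t : ℕ, (1:ℝ) ≤ (t : ℝ) + 1 := by
    intro t; have : (0:ℝ) ≤ (t : ℝ) := Nat.cast_nonneg t; linarith
  have hppos : ∀ t : ℕ, (0:ℝ) < (t : ℝ) + 1 := fun t => lt_of_lt_of_le one_pos (hp1 t)
  have hrpos : ∀ t : ℕ, 0 < a1 * ((t : ℝ) + 1) ^ (-μ) :=
    fun t => mul_pos ha1 (Real.rpow_pos_of_pos (hppos t) _)
  have hσ2 : 0 ≤ σ2 := by
    rw [← hwvar 0]; exact integral_nonneg fun ω => sq_nonneg _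
  -- measurability of the process
  have hzmeas : ∀ t, Measurable (z t) := by
    intro t
    induction t with
    | zero => rw [hzinit]; exact hz0meas
    | succ t ih =>
      have : z (t + 1) = fun ω => (1 - a1 * ((t : ℝ) + 1) ^ (-μ)) * z t ω
          + a1 * ((t : ℝ) + 1) ^ (-μ) * (r2 t ω + w t ω) := funext (hz t)
      rw [this]
      exact (measurable_const.mul ih).add
        (measurable_const.mul ((hr2meas t).add (hwmeas t)))
  -- square-integrability of perturbations
  have hr2sq : ∀ t, Integrable (fun ω => (r2 t ω) ^ 2) P := by
    intro t
    refine Integrable.mono' (integrable_const ((a2 * ((t : ℝ) + 1) ^ (-δ)) ^ 2))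
      (((hr2meas t).pow_const 2).aestronglyMeasurable) ?_
    filter_upwards [hr2 t] with ω hω
    rw [aux_norm_sq, ← sq_abs]
    exact pow_le_pow_left₀ (abs_nonneg _) hω 2
  have hVmeas : Measurable (fun ω => (z0 ω, fun s => r2 s ω) : Ω → ℝ × (ℕ → ℝ)) :=
    hz0meas.prodMk (measurable_pi_lambda _ hr2meas)
  have hWmeas : Measurable (fun ω (s : ℕ) => w s ω) := measurable_pi_lambda _ hwmeas
  -- linear representation of the process
  have hrep : ∀ t, ∃ (h : ℝ × (ℕ → ℝ) → ℝ) (c : ℕ → ℝ), Measurable h ∧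
      Integrable (fun ω => (h (z0 ω, fun s => r2 s ω)) ^ 2) P ∧
      (∀ ω, z t ω = h (z0 ω, fun s => r2 s ω) + ∑ s ∈ Finset.range t, c s * w s ω) ∧
      (∀ s, s + 1 = t → c s = a1 * ((s : ℝ) + 1) ^ (-μ)) := by
    intro t
    induction t with
    | zero =>
      refine ⟨Prod.fst, fun _ => 0, measurable_fst, ?_, ?_, ?_⟩
      · exact hz0L2
      · intro ω; simp [hzinit]
      · intro s hs; omega
    | succ t ih =>
      obtain ⟨h, c, hh, hhint, heq, -⟩ := ih
      set r := a1 * ((t : ℝ) + 1) ^ (-μ) with hrdef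
      refine ⟨fun v => (1 - r) * h v + r * v.2 t,
        fun s => if s = t then r else (1 - r) * c s, ?_, ?_, ?_, ?_⟩
      · exact (measurable_const.mul hh).add
          (measurable_const.mul ((measurable_pi_apply t).comp measurable_snd))
      · refine Integrable.mono' ((hhint.const_mul (2 * (1 - r) ^ 2)).add
          ((hr2sq t).const_mul (2 * r ^ 2))) ?_ ?_
        · exact ((((measurable_const.mul hh).add
            (measurable_const.mul ((measurable_pi_apply t).comp measurable_snd))).comp
            hVmeas).pow_const 2).aestronglyMeasurable
        · refine Filter.Eventually.of_forall fun ω => ?_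
          simp only [Pi.add_apply, aux_norm_sq]
          nlinarith [sq_nonneg ((1 - r) * h (z0 ω, fun s => r2 s ω) - r * r2 t ω)]
      · intro ω
        show z (t + 1) ω = ((1 - r) * h (z0 ω, fun s => r2 s ω) + r * r2 t ω)
          + ∑ s ∈ Finset.range (t + 1), (if s = t then r else (1 - r) * c s) * w s ω
        have hsum : ∑ s ∈ Finset.range t, (if s = t then r else (1 - r) * c s) * w s ω
            = (1 - r) * ∑ s ∈ Finset.range t, c s * w s ω := by
          rw [Finset.mul_sum]
          refine Finset.sum_congr rfl fun s hs => ?_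
          rw [if_neg (Nat.ne_of_lt (Finset.mem_range.mp hs))]; ring
        have hite : (if t = t then r else (1 - r) * c t) = r := if_pos rfl
        rw [Finset.sum_range_succ, hsum, hite, hz t ω, heq ω]
        ring
      · intro s hs
        have hst : s = t := by omega
        subst hst
        show (if s = s then r else (1 - r) * c s) = a1 * ((s : ℝ) + 1) ^ (-μ)
        rw [if_pos rfl]
  -- nonnegativity of second moments
  have hA0 : ∀ t, 0 ≤ ∫ ω, (z t ω) ^ 2 ∂P := fun t => integral_nonneg fun ω => sq_nonneg _
  by_cases hWL2 : Integrable (fun ω => (w 0 ω) ^ 2) P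
  · -- main case : noise is square integrable
    have hw2 : ∀ t, Integrable (fun ω => (w t ω) ^ 2) P := fun t =>
      ((hwiid t).comp (measurable_id.pow_const 2)).integrable_iff.mpr hWL2
    have hwint : ∀ t, Integrable (w t) P := fun t =>
      aux_int_of_sq (hwmeas t).aestronglyMeasurable (hw2 t)
    have hzL2 : ∀ t, Integrable (fun ω => (z t ω) ^ 2) P := by
      intro t
      induction t with
      | zero => simp only [hzinit]; exact hz0L2
      | succ t ih =>
        set r := a1 * ((t : ℝ) + 1) ^ (-μ) with hrdef
        refine Integrable.mono' (((ih.const_mul (3 * (1 - r) ^ 2)).add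
          ((hr2sq t).const_mul (3 * r ^ 2))).add ((hw2 t).const_mul (3 * r ^ 2)))
          (((hzmeas (t + 1)).pow_const 2).aestronglyMeasurable) ?_
        refine Filter.Eventually.of_forall fun ω => ?_
        simp only [Pi.add_apply, aux_norm_sq]
        rw [hz t ω, ← hrdef]
        nlinarith [sq_nonneg ((1 - r) * z t ω - r * r2 t ω),
          sq_nonneg ((1 - r) * z t ω - r * w t ω), sq_nonneg (r * r2 t ω - r * w t ω)]
    have hzint : ∀ t, Integrable (z t) P := fun t =>
      aux_int_of_sq (hzmeas t).aestronglyMeasurable (hzL2 t)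
    -- choice of the threshold
    obtain ⟨T, hT⟩ : ∃ T : ℕ, ∀ t ≥ T, a2 * ((t : ℝ) + 1) ^ (-δ) ≤ 1 / 4 := by
      refine ⟨⌈(4 * a2) ^ (1 / δ)⌉₊, fun t ht => ?_⟩
      have h1 : (4 * a2) ^ (1 / δ) ≤ (t : ℝ) + 1 := by
        calc (4 * a2) ^ (1 / δ) ≤ (⌈(4 * a2) ^ (1 / δ)⌉₊ : ℝ) := Nat.le_ceil _
        _ ≤ (t : ℝ) := by exact_mod_cast ht
        _ ≤ (t : ℝ) + 1 := by linarith
      have h2 : (4 * a2) ≤ ((t : ℝ) + 1) ^ δ := by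
        have := Real.rpow_le_rpow (Real.rpow_nonneg (by positivity) _) h1 hδ.le
        rwa [← Real.rpow_mul (by positivity), one_div_mul_cancel hδ.ne', Real.rpow_one] at this
      have h3 : (0:ℝ) < ((t : ℝ) + 1) ^ δ := Real.rpow_pos_of_pos (hppos t) _
      rw [Real.rpow_neg (hppos t).le, mul_comm, ← div_eq_inv_mul, div_le_iff₀ h3]
      nlinarith
    refine ⟨a1 / 2, 2 * a1 * a2 + a1 ^ 2 * (a2 ^ 2 + σ2), by positivity, ?_, T, ?_⟩
    · have h1 : 0 < 2 * a1 * a2 := by positivity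
      have h2 : 0 ≤ a1 ^ 2 * (a2 ^ 2 + σ2) := by positivity
      linarith
    intro t ht
    set p : ℝ := (t : ℝ) + 1 with hpdef
    set r := a1 * p ^ (-μ) with hrdef
    have hr0 : 0 < r := hrpos t
    have hrle : r ≤ 1 := hr1 t
    set X : Ω → ℝ := fun ω => (1 - r) * z t ω + r * r2 t ω with hXdef
    have hXmeas : Measurable X :=
      (measurable_const.mul (hzmeas t)).add (measurable_const.mul (hr2meas t))
    have hX2 : Integrable (fun ω => (X ω) ^ 2) P := by
      refine Integrable.mono' (((hzL2 t).const_mul (2 * (1 - r) ^ 2)).add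
        ((hr2sq t).const_mul (2 * r ^ 2))) ((hXmeas.pow_const 2).aestronglyMeasurable) ?_
      refine Filter.Eventually.of_forall fun ω => ?_
      simp only [Pi.add_apply, aux_norm_sq, hXdef]
      nlinarith [sq_nonneg ((1 - r) * z t ω - r * r2 t ω)]
    have hXw : Integrable (fun ω => X ω * w t ω) P :=
      aux_mul_int hXmeas.aestronglyMeasurable (hwmeas t).aestronglyMeasurable hX2 (hw2 t)
    -- the cross term vanishes
    have hcross0 : ∫ ω, X ω * w t ω ∂P = 0 := by
      obtain ⟨h, c, hh, hhint, heq, -⟩ := hrep t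
      set H : ℝ × (ℕ → ℝ) → ℝ := fun v => (1 - r) * h v + r * v.2 t with hHdef
      have hHmeas : Measurable H := (measurable_const.mul hh).add
        (measurable_const.mul ((measurable_pi_apply t).comp measurable_snd))
      have hXrep : ∀ ω, X ω = H (z0 ω, fun s => r2 s ω)
          + ∑ s ∈ Finset.range t, ((1 - r) * c s) * w s ω := by
        intro ω
        have hsum : ∑ s ∈ Finset.range t, ((1 - r) * c s) * w s ω
            = (1 - r) * ∑ s ∈ Finset.range t, c s * w s ω := by
          rw [Finset.mul_sum]; exact Finset.sum_congr rfl fun s _ => by ring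
        simp only [hXdef, hHdef]
        rw [heq ω, hsum]
        ring
      have hHV2 : Integrable (fun ω => (H (z0 ω, fun s => r2 s ω)) ^ 2) P := by
        refine Integrable.mono' ((hhint.const_mul (2 * (1 - r) ^ 2)).add
          ((hr2sq t).const_mul (2 * r ^ 2)))
          (((hHmeas.comp hVmeas).pow_const 2).aestronglyMeasurable) ?_
        refine Filter.Eventually.of_forall fun ω => ?_
        simp only [Pi.add_apply, aux_norm_sq, hHdef]
        nlinarith [sq_nonneg ((1 - r) * h (z0 ω, fun s => r2 s ω) - r * r2 t ω)]
      have hsplit : (fun ω => X ω * w t ω) = fun ω => H (z0 ω, fun s => r2 s ω) * w t ω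
          + ∑ s ∈ Finset.range t, ((1 - r) * c s) * (w s ω * w t ω) := by
        funext ω
        rw [hXrep ω, add_mul, Finset.sum_mul]
        congr 1
        exact Finset.sum_congr rfl fun s _ => by ring
      have hHw : Integrable (fun ω => H (z0 ω, fun s => r2 s ω) * w t ω) P :=
        aux_mul_int (hHmeas.comp hVmeas).aestronglyMeasurable
          (hwmeas t).aestronglyMeasurable hHV2 (hw2 t)
      have hterms : ∀ s ∈ Finset.range t,
          Integrable (fun ω => ((1 - r) * c s) * (w s ω * w t ω)) P := fun s _ =>
        (aux_mul_int (hwmeas s).aestronglyMeasurable (hwmeas t).aestronglyMeasurable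
          (hw2 s) (hw2 t)).const_mul _
      rw [hsplit, integral_add hHw (integrable_finset_sum _ hterms),
        integral_finset_sum _ hterms]
      have e1 : ∫ ω, H (z0 ω, fun s => r2 s ω) * w t ω ∂P = 0 := by
        have hIF : IndepFun (fun ω => H (z0 ω, fun s => r2 s ω)) (w t) P :=
          hindep.comp hHmeas (measurable_pi_apply t)
        rw [hIF.integral_fun_mul_eq_mul_integral ((hHmeas.comp hVmeas).aestronglyMeasurable)
          (hwmeas t).aestronglyMeasurable, hwmean t, mul_zero]
      have e2 : ∀ s ∈ Finset.range t,
          ∫ ω, ((1 - r) * c s) * (w s ω * w t ω) ∂P = 0 := by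
        intro s hs
        rw [integral_const_mul,
          (hwindep.indepFun (Nat.ne_of_lt (Finset.mem_range.mp hs))).integral_fun_mul_eq_mul_integral
            (hwmeas s).aestronglyMeasurable (hwmeas t).aestronglyMeasurable,
          hwmean t, mul_zero, mul_zero]
      rw [e1, Finset.sum_congr rfl e2, Finset.sum_const, smul_zero, add_zero]
    -- second moment recursion
    have hmom : ∫ ω, (z (t + 1) ω) ^ 2 ∂P
        = (∫ ω, (X ω) ^ 2 ∂P) + r ^ 2 * σ2 := by
      have e1 : (fun ω => (z (t + 1) ω) ^ 2)
          = fun ω => ((X ω) ^ 2 + (2 * r) * (X ω * w t ω)) + r ^ 2 * (w t ω) ^ 2 := by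
        funext ω
        simp only [hXdef]
        rw [hz t ω, ← hpdef, ← hrdef]
        ring
      have i3 : Integrable (fun ω => (2 * r) * (X ω * w t ω)) P := hXw.const_mul _
      have i1 : Integrable (fun ω => (X ω) ^ 2 + (2 * r) * (X ω * w t ω)) P := hX2.add i3
      have i2 : Integrable (fun ω => r ^ 2 * (w t ω) ^ 2) P := (hw2 t).const_mul _
      rw [e1, integral_add i1 i2, integral_add hX2 i3, integral_const_mul, integral_const_mul,
        hcross0, hwvar t]
      ring
    -- bounds
    set A := ∫ ω, (z t ω) ^ 2 ∂P with hAdef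
    have hA : 0 ≤ A := hA0 t
    set b := a2 * p ^ (-δ) with hbdef
    have hb0 : 0 ≤ b := by positivity
    have hb : b ≤ 1 / 4 := hT t ht
    have habs : ∫ ω, |z t ω| ∂P ≤ 1 + A := by
      have h1 : ∫ ω, |z t ω| ∂P ≤ ∫ ω, 1 + (z t ω) ^ 2 ∂P := by
        refine integral_mono (hzint t).abs ((integrable_const 1).add (hzL2 t)) fun ω => ?_
        nlinarith [sq_nonneg (|z t ω| - 1), sq_abs (z t ω)]
      have h2 : ∫ ω, 1 + (z t ω) ^ 2 ∂P = 1 + A := by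
        rw [integral_add (integrable_const 1) (hzL2 t)]
        simp [hAdef]
      linarith
    have hzr2int : Integrable (fun ω => z t ω * r2 t ω) P :=
      aux_mul_int (hzmeas t).aestronglyMeasurable (hr2meas t).aestronglyMeasurable
        (hzL2 t) (hr2sq t)
    have hcross : ∫ ω, z t ω * r2 t ω ∂P ≤ b * (1 + A) := by
      have h1 : ∫ ω, z t ω * r2 t ω ∂P ≤ ∫ ω, b * |z t ω| ∂P := by
        refine integral_mono_ae hzr2int ((hzint t).abs.const_mul b) ?_
        filter_upwards [hr2 t] with ω hω
        calc z t ω * r2 t ω ≤ |z t ω * r2 t ω| := le_abs_self _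
        _ = |r2 t ω| * |z t ω| := by rw [abs_mul, mul_comm]
        _ ≤ b * |z t ω| := mul_le_mul_of_nonneg_right hω (abs_nonneg _)
      rw [integral_const_mul] at h1
      calc ∫ ω, z t ω * r2 t ω ∂P ≤ b * ∫ ω, |z t ω| ∂P := h1
      _ ≤ b * (1 + A) := mul_le_mul_of_nonneg_left habs hb0
    have hr2b : ∫ ω, (r2 t ω) ^ 2 ∂P ≤ a2 ^ 2 := by
      have h1 : ∫ ω, (r2 t ω) ^ 2 ∂P ≤ ∫ _ω, a2 ^ 2 ∂P := by
        refine integral_mono_ae (hr2sq t) (integrable_const _) ?_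
        filter_upwards [hr2 t] with ω hω
        have h2 : p ^ (-δ) ≤ 1 :=
          Real.rpow_le_one_of_one_le_of_nonpos (hp1 t) (by linarith)
        have h3 : |r2 t ω| ≤ a2 := by
          calc |r2 t ω| ≤ a2 * p ^ (-δ) := hω
          _ ≤ a2 * 1 := mul_le_mul_of_nonneg_left h2 ha2.le
          _ = a2 := mul_one a2
        calc (r2 t ω) ^ 2 = |r2 t ω| ^ 2 := (sq_abs _).symm
        _ ≤ a2 ^ 2 := pow_le_pow_left₀ (abs_nonneg _) h3 2
      simpa using h1
    have hX2b : ∫ ω, (X ω) ^ 2 ∂P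
        ≤ (1 - r) ^ 2 * A + (2 * r * (1 - r)) * (b * (1 + A)) + r ^ 2 * a2 ^ 2 := by
      have e1 : (fun ω => (X ω) ^ 2) = fun ω => ((1 - r) ^ 2 * (z t ω) ^ 2
          + (2 * r * (1 - r)) * (z t ω * r2 t ω)) + r ^ 2 * (r2 t ω) ^ 2 := by
        funext ω; simp only [hXdef]; ring
      have j1 : Integrable (fun ω => (2 * r * (1 - r)) * (z t ω * r2 t ω)) P :=
        hzr2int.const_mul _
      have j2 : Integrable (fun ω => (1 - r) ^ 2 * (z t ω) ^ 2) P := (hzL2 t).const_mul _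
      have j3 : Integrable (fun ω => (1 - r) ^ 2 * (z t ω) ^ 2
          + (2 * r * (1 - r)) * (z t ω * r2 t ω)) P := j2.add j1
      have j4 : Integrable (fun ω => r ^ 2 * (r2 t ω) ^ 2) P := (hr2sq t).const_mul _
      rw [e1, integral_add j3 j4, integral_add j2 j1,
        integral_const_mul, integral_const_mul, integral_const_mul]
      have c1 : 0 ≤ 2 * r * (1 - r) := by nlinarith
      have c2 : (2 * r * (1 - r)) * (∫ ω, z t ω * r2 t ω ∂P)
          ≤ (2 * r * (1 - r)) * (b * (1 + A)) := mul_le_mul_of_nonneg_left hcross c1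
      have c3 : r ^ 2 * (∫ ω, (r2 t ω) ^ 2 ∂P) ≤ r ^ 2 * a2 ^ 2 :=
        mul_le_mul_of_nonneg_left hr2b (sq_nonneg r)
      have c4 : (1 - r) ^ 2 * (∫ ω, (z t ω) ^ 2 ∂P) = (1 - r) ^ 2 * A := by rw [hAdef]
      linarith
    -- exponent comparisons
    have hqd : p ^ (-μ) * p ^ (-δ) ≤ p ^ (-(μ + δ0)) := by
      rw [← Real.rpow_add (hppos t)]
      exact Real.rpow_le_rpow_of_exponent_le (hp1 t) (by linarith)
    have hqq : p ^ (-μ) * p ^ (-μ) ≤ p ^ (-(μ + δ0)) := by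
      rw [← Real.rpow_add (hppos t)]
      exact Real.rpow_le_rpow_of_exponent_le (hp1 t) (by linarith)
    have hdiv1 : (a1 / 2) / p ^ μ = (a1 / 2) * p ^ (-μ) := by
      rw [Real.rpow_neg (hppos t).le, div_eq_mul_inv]
    have hdiv2 : (2 * a1 * a2 + a1 ^ 2 * (a2 ^ 2 + σ2)) / p ^ (μ + δ0)
        = (2 * a1 * a2 + a1 ^ 2 * (a2 ^ 2 + σ2)) * p ^ (-(μ + δ0)) := by
      rw [Real.rpow_neg (hppos t).le, div_eq_mul_inv]
    -- final arithmetic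
    rw [hmom]
    have s1 : (1 - r) ^ 2 * A ≤ (1 - r) * A := by
      have := mul_nonneg (mul_nonneg hr0.le (show (0:ℝ) ≤ 1 - r by linarith)) hA
      nlinarith
    have s2 : (2 * r * (1 - r)) * (b * (1 + A)) ≤ 2 * r * b + 2 * r * b * A := by
      have := mul_nonneg (mul_nonneg (mul_nonneg hr0.le hr0.le) hb0)
        (show (0:ℝ) ≤ 1 + A by linarith)
      nlinarith
    have s3 : 2 * r * b * A ≤ (r / 2) * A := by
      have := mul_nonneg (mul_nonneg (show (0:ℝ) ≤ 1 / 2 - 2 * b by linarith) hr0.le) hA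
      nlinarith
    have s5 : 2 * r * b ≤ 2 * a1 * a2 * p ^ (-(μ + δ0)) := by
      have e : 2 * r * b = 2 * a1 * a2 * (p ^ (-μ) * p ^ (-δ)) := by
        rw [hrdef, hbdef]; ring
      rw [e]
      exact mul_le_mul_of_nonneg_left hqd (by positivity)
    have s6 : r ^ 2 * (a2 ^ 2 + σ2) ≤ a1 ^ 2 * (a2 ^ 2 + σ2) * p ^ (-(μ + δ0)) := by
      have e : r ^ 2 * (a2 ^ 2 + σ2) = a1 ^ 2 * (a2 ^ 2 + σ2) * (p ^ (-μ) * p ^ (-μ)) := by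
        rw [hrdef]; ring
      rw [e]
      have hnn : 0 ≤ a1 ^ 2 * (a2 ^ 2 + σ2) := by positivity
      exact mul_le_mul_of_nonneg_left hqq hnn
    calc (∫ ω, (X ω) ^ 2 ∂P) + r ^ 2 * σ2
        ≤ ((1 - r) ^ 2 * A + (2 * r * (1 - r)) * (b * (1 + A)) + r ^ 2 * a2 ^ 2)
          + r ^ 2 * σ2 := by linarith
      _ ≤ ((1 - r) * A + (2 * r * b + 2 * r * b * A) + r ^ 2 * a2 ^ 2) + r ^ 2 * σ2 := by
          linarith
      _ ≤ (1 - r / 2) * A + 2 * r * b + r ^ 2 * (a2 ^ 2 + σ2) := by linarith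
      _ ≤ (1 - r / 2) * A + 2 * a1 * a2 * p ^ (-(μ + δ0))
          + a1 ^ 2 * (a2 ^ 2 + σ2) * p ^ (-(μ + δ0)) := by linarith
      _ = (1 - (a1 / 2) * p ^ (-μ)) * A
          + (2 * a1 * a2 + a1 ^ 2 * (a2 ^ 2 + σ2)) * p ^ (-(μ + δ0)) := by
          rw [hrdef]; ring
      _ = (1 - a1 / 2 / p ^ μ) * A
          + (2 * a1 * a2 + a1 ^ 2 * (a2 ^ 2 + σ2)) / p ^ (μ + δ0) := by
          rw [hdiv1, hdiv2]
  · -- degenerate case : the noise is not square integrable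
    have hw2iff : ∀ t, Integrable (fun ω => (w t ω) ^ 2) P ↔
        Integrable (fun ω => (w 0 ω) ^ 2) P := fun t =>
      ((hwiid t).comp (measurable_id.pow_const 2)).integrable_iff
    have hnot : ∀ n, 1 ≤ n → ¬ Integrable (fun ω => (z n ω) ^ 2) P := by
      rintro n hn hInt
      obtain ⟨t, rfl⟩ : ∃ t, n = t + 1 := ⟨n - 1, by omega⟩
      set r := a1 * ((t : ℝ) + 1) ^ (-μ) with hrdef
      have hr0 : 0 < r := hrpos t
      obtain ⟨h, c, hh, hhint, heq, hlast⟩ := hrep (t + 1)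
      have hct : c t = r := hlast t rfl
      set F : ℝ × (ℕ → ℝ) → (ℕ → ℝ) → ℝ :=
        fun v u => (h v + ∑ s ∈ Finset.range (t + 1), c s * u s) ^ 2 with hFdef
      have hF : Measurable (Function.uncurry F) := by
        apply Measurable.pow_const
        exact (hh.comp measurable_fst).add (Finset.measurable_sum _ fun s _ =>
          measurable_const.mul ((measurable_pi_apply s).comp measurable_snd))
      have hFeq : (fun ω => F (z0 ω, fun s => r2 s ω) (fun s => w s ω))
          = fun ω => (z (t + 1) ω) ^ 2 := by
        funext ω
        simp only [hFdef]
        rw [← heq ω]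
      obtain ⟨v, hv⟩ := aux_pick P hVmeas hWmeas hindep hF (by rw [hFeq]; exact hInt)
      simp only [hFdef] at hv
      set S : Ω → ℝ := fun ω => ∑ s ∈ Finset.range (t + 1), c s * w s ω with hSdef
      have hSmeas : Measurable S := Finset.measurable_sum _ fun s _ =>
        measurable_const.mul (hwmeas s)
      have hS2 : Integrable (fun ω => (S ω) ^ 2) P := by
        refine Integrable.mono' ((hv.const_mul 2).add (integrable_const (2 * (h v) ^ 2)))
          ((hSmeas.pow_const 2).aestronglyMeasurable) ?_
        refine Filter.Eventually.of_forall fun ω => ?_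
        simp only [Pi.add_apply, aux_norm_sq, hSdef]
        nlinarith [sq_nonneg (h v + ∑ s ∈ Finset.range (t + 1), c s * w s ω + h v)]
      set S' : Ω → ℝ := fun ω => ∑ s ∈ Finset.range t, c s * w s ω with hS'def
      have hS'meas : Measurable S' := Finset.measurable_sum _ fun s _ =>
        measurable_const.mul (hwmeas s)
      have hgfam : iIndepFun (fun s ω => c s * w s ω) P :=
        hwindep.comp (fun s x => c s * x) fun s => measurable_const_mul _
      have hindep2 : IndepFun S' (fun ω => c t * w t ω) P := by
        have h1 := hgfam.indepFun_finsetSum_of_notMem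
          (fun s => (measurable_const_mul _).comp (hwmeas s)) (s := Finset.range t)
          (i := t) (by simp)
        have e : (∑ j ∈ Finset.range t, fun ω => c j * w j ω) = S' := by
          funext ω
          simp only [hS'def, Finset.sum_apply]
        rwa [e] at h1
      have hS2' : Integrable (fun ω => (S' ω + c t * w t ω) ^ 2) P := by
        have e : (fun ω => (S' ω + c t * w t ω) ^ 2) = fun ω => (S ω) ^ 2 := by
          funext ω
          simp only [hSdef, hS'def, Finset.sum_range_succ]
        rw [e]; exact hS2
      obtain ⟨a, ha⟩ := aux_pick P hS'meas ((measurable_const_mul (c t)).comp (hwmeas t))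
        hindep2 (F := fun x y => (x + y) ^ 2)
        (by apply Measurable.pow_const; exact measurable_fst.add measurable_snd) hS2'
      simp only [Function.comp_apply] at ha
      have hwt2 : Integrable (fun ω => (c t * w t ω) ^ 2) P := by
        refine Integrable.mono' ((ha.const_mul 2).add (integrable_const (2 * a ^ 2)))
          ((((measurable_const_mul (c t)).comp (hwmeas t)).pow_const 2).aestronglyMeasurable)
          ?_
        refine Filter.Eventually.of_forall fun ω => ?_
        simp only [Pi.add_apply, aux_norm_sq]
        nlinarith [sq_nonneg (a + c t * w t ω + a)]
      have hwt2' : Integrable (fun ω => (w t ω) ^ 2) P := by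
        have e : (fun ω => (c t * w t ω) ^ 2) = fun ω => (c t) ^ 2 * (w t ω) ^ 2 := by
          funext ω; ring
        rw [e] at hwt2
        have hunit : IsUnit ((c t) ^ 2) := by
          rw [hct]
          exact (isUnit_iff_ne_zero).mpr (pow_ne_zero 2 hr0.ne')
        exact (integrable_const_mul_iff hunit _).mp hwt2
      exact hWL2 ((hw2iff t).mp hwt2')
    refine ⟨1, 1, one_pos, one_pos, 1, fun t ht => ?_⟩
    rw [integral_undef (hnot (t + 1) (by omega)), integral_undef (hnot t (by omega))]
    have hpos : (0:ℝ) < 1 / ((t : ℝ) + 1) ^ (μ + δ0) := by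
      have := Real.rpow_pos_of_pos (hppos t) (μ + δ0)
      positivity
    linarith [mul_zero (1 - 1 / ((t : ℝ) + 1) ^ μ)]
end

section
/- Let 0 < μ < 1, ε_0 > 0, 0 < c_5 < 1 and c_6 > 0. Then the deterministic double sequence S(t) = Σ_{i=0}^{t−1} [ Π_{j=i+1}^{t−1} (1 − c_5/(j+1)^μ) ] · c_6/(i+1)^{μ + ε_0} satisfies lim_{t→∞} S(t) = 0 (with the empty product for i = t−1 equal to 1). -/
open Filter

/-- The deterministic double sequence
`S(t) = Σ_{i=0}^{t−1} [ Π_{j=i+1}^{t−1} (1 − c5/(j+1)^μ) ] · c6/(i+1)^{μ+ε0}`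
tends to `0` as `t → ∞`. -/
theorem stmt_10 (μ ε0 c5 c6 : ℝ) (hμ : 0 < μ) (hμ1 : μ < 1)
    (hε0 : 0 < ε0) (hc5 : 0 < c5) (hc5' : c5 < 1) (hc6 : 0 < c6) :
    Tendsto (fun t : ℕ =>
      ∑ i ∈ Finset.range t,
        (∏ j ∈ Finset.Ico (i + 1) t, (1 - c5 / ((j : ℝ) + 1) ^ μ)) *
          (c6 / ((i : ℝ) + 1) ^ (μ + ε0)))
      atTop (nhds 0) := by
  classical
  set a : ℕ → ℝ := fun j => c5 / ((j : ℝ) + 1) ^ μ with ha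
  set b : ℕ → ℝ := fun i => c6 / ((i : ℝ) + 1) ^ (μ + ε0) with hb
  have hbase : ∀ j : ℕ, (1 : ℝ) ≤ (j : ℝ) + 1 := by
    intro j
    have : (0 : ℝ) ≤ (j : ℝ) := Nat.cast_nonneg j
    linarith
  have hbasepos : ∀ j : ℕ, (0 : ℝ) < (j : ℝ) + 1 := fun j =>
    lt_of_lt_of_le one_pos (hbase j)
  have hpow1 : ∀ j : ℕ, (1 : ℝ) ≤ ((j : ℝ) + 1) ^ μ := fun j =>
    Real.one_le_rpow (hbase j) hμ.le
  have hpowpos : ∀ j : ℕ, (0 : ℝ) < ((j : ℝ) + 1) ^ μ := fun j =>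
    lt_of_lt_of_le one_pos (hpow1 j)
  have ha_pos : ∀ j, 0 < a j := fun j => div_pos hc5 (hpowpos j)
  have ha_lt1 : ∀ j, a j < 1 := by
    intro j
    have : a j ≤ c5 := by
      rw [ha]
      calc c5 / ((j : ℝ) + 1) ^ μ ≤ c5 / 1 := by
            apply div_le_div_of_nonneg_left hc5.le one_pos (hpow1 j)
        _ = c5 := div_one c5
    linarith
  have hfac_pos : ∀ j, (0 : ℝ) < 1 - a j := fun j => by linarith [ha_lt1 j]
  have hP_nonneg : ∀ i t : ℕ, (0 : ℝ) ≤ ∏ j ∈ Finset.Ico (i + 1) t, (1 - a j) :=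
    fun i t => Finset.prod_nonneg fun j _ => (hfac_pos j).le
  have hb_pos : ∀ i, 0 < b i := fun i =>
    div_pos hc6 (Real.rpow_pos_of_pos (hbasepos i) _)
  -- telescoping identity
  have htel : ∀ t : ℕ,
      ∑ i ∈ Finset.range t, (∏ j ∈ Finset.Ico (i + 1) t, (1 - a j)) * a i
        = 1 - ∏ j ∈ Finset.range t, (1 - a j) := by
    intro t
    induction t with
    | zero => simp
    | succ t ih =>
      rw [Finset.sum_range_succ, Finset.prod_range_succ]
      have hcongr : ∀ i ∈ Finset.range t,
          (∏ j ∈ Finset.Ico (i + 1) (t + 1), (1 - a j)) * a i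
            = ((∏ j ∈ Finset.Ico (i + 1) t, (1 - a j)) * a i) * (1 - a t) := by
        intro i hi
        have hit : i + 1 ≤ t := Finset.mem_range.mp hi
        rw [Finset.prod_Ico_succ_top hit]
        ring
      rw [Finset.sum_congr rfl hcongr, ← Finset.sum_mul, ih]
      simp [Finset.Ico_self]
      ring
  have htel_le : ∀ t : ℕ,
      ∑ i ∈ Finset.range t, (∏ j ∈ Finset.Ico (i + 1) t, (1 - a j)) * a i ≤ 1 := by
    intro t
    rw [htel t]
    have : (0 : ℝ) ≤ ∏ j ∈ Finset.range t, (1 - a j) :=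
      Finset.prod_nonneg fun j _ => (hfac_pos j).le
    linarith
  -- b i in terms of a i
  have hb_eq : ∀ i : ℕ, b i = (c6 / c5) * ((i : ℝ) + 1) ^ (-ε0) * a i := by
    intro i
    have hx : (0 : ℝ) < (i : ℝ) + 1 := hbasepos i
    simp only [hb, ha]
    rw [Real.rpow_add hx, Real.rpow_neg hx.le]
    field_simp
  -- each product tends to 0 as t → ∞ (fixed i)
  have hPtend : ∀ i : ℕ,
      Tendsto (fun t : ℕ => ∏ j ∈ Finset.Ico (i + 1) t, (1 - a j)) atTop (nhds 0) := by
    intro i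
    have hupper : ∀ t : ℕ,
        (∏ j ∈ Finset.Ico (i + 1) t, (1 - a j))
          ≤ Real.exp (-(∑ j ∈ Finset.Ico (i + 1) t, a j)) := by
      intro t
      calc (∏ j ∈ Finset.Ico (i + 1) t, (1 - a j))
          ≤ ∏ j ∈ Finset.Ico (i + 1) t, Real.exp (-(a j)) := by
            apply Finset.prod_le_prod (fun j _ => (hfac_pos j).le)
            intro j _
            have := Real.add_one_le_exp (-(a j))
            linarith
        _ = Real.exp (∑ j ∈ Finset.Ico (i + 1) t, -(a j)) := (Real.exp_sum _ _).symm
        _ = Real.exp (-(∑ j ∈ Finset.Ico (i + 1) t, a j)) := by rw [Finset.sum_neg_distrib]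
    -- the sums of a over Ico (i+1) t tend to ∞
    have hsum_atTop : Tendsto (fun t : ℕ => ∑ j ∈ Finset.Ico (i + 1) t, a j) atTop atTop := by
      have hhar : Tendsto (fun t : ℕ => ∑ j ∈ Finset.range t, (1 / ((j : ℝ) + 1)))
          atTop atTop := by
        have := Real.tendsto_sum_range_one_div_nat_succ_atTop
        simpa using this
      have hlow : ∀ t : ℕ, c5 * (∑ j ∈ Finset.range t, (1 / ((j : ℝ) + 1)))
            - c5 * (∑ j ∈ Finset.range (i + 1), (1 / ((j : ℝ) + 1)))
          ≤ ∑ j ∈ Finset.Ico (i + 1) t, a j := by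
        intro t
        rcases le_or_gt (i + 1) t with h | h
        · have hsplit : (∑ j ∈ Finset.range (i + 1), (1 / ((j : ℝ) + 1)))
              + (∑ j ∈ Finset.Ico (i + 1) t, (1 / ((j : ℝ) + 1)))
              = ∑ j ∈ Finset.range t, (1 / ((j : ℝ) + 1)) := by
            rw [Finset.range_eq_Ico, Finset.range_eq_Ico]
            exact Finset.sum_Ico_consecutive _ (Nat.zero_le _) h
          have hterm : ∀ j ∈ Finset.Ico (i + 1) t, c5 * (1 / ((j : ℝ) + 1)) ≤ a j := by
            intro j _
            rw [ha]
            have h1 : ((j : ℝ) + 1) ^ μ ≤ ((j : ℝ) + 1) ^ (1 : ℝ) :=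
              Real.rpow_le_rpow_of_exponent_le (hbase j) hμ1.le
            rw [Real.rpow_one] at h1
            rw [mul_one_div]
            exact div_le_div_of_nonneg_left hc5.le (hpowpos j) h1
          calc c5 * (∑ j ∈ Finset.range t, (1 / ((j : ℝ) + 1)))
                - c5 * (∑ j ∈ Finset.range (i + 1), (1 / ((j : ℝ) + 1)))
              = c5 * (∑ j ∈ Finset.Ico (i + 1) t, (1 / ((j : ℝ) + 1))) := by
                rw [← hsplit]; ring
            _ = ∑ j ∈ Finset.Ico (i + 1) t, c5 * (1 / ((j : ℝ) + 1)) := by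
                rw [Finset.mul_sum]
            _ ≤ ∑ j ∈ Finset.Ico (i + 1) t, a j := Finset.sum_le_sum hterm
        · have hmono : ∀ j ∈ Finset.range t, (0:ℝ) ≤ 1 / ((j : ℝ) + 1) :=
            fun j _ => by positivity
          have hsub : Finset.range t ⊆ Finset.range (i + 1) :=
            Finset.range_subset_range.mpr h.le
          have h1 : (∑ j ∈ Finset.range t, (1 / ((j : ℝ) + 1)))
              ≤ ∑ j ∈ Finset.range (i + 1), (1 / ((j : ℝ) + 1)) :=
            Finset.sum_le_sum_of_subset_of_nonneg hsub (fun j _ _ => by positivity)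
          have h2 : (0:ℝ) ≤ ∑ j ∈ Finset.Ico (i + 1) t, a j :=
            Finset.sum_nonneg fun j _ => (ha_pos j).le
          nlinarith
      have hlhs : Tendsto (fun t : ℕ => c5 * (∑ j ∈ Finset.range t, (1 / ((j : ℝ) + 1)))
            - c5 * (∑ j ∈ Finset.range (i + 1), (1 / ((j : ℝ) + 1)))) atTop atTop := by
        apply Tendsto.atTop_add _ tendsto_const_nhds
        exact Tendsto.const_mul_atTop hc5 hhar
      exact tendsto_atTop_mono hlow hlhs
    have hexp : Tendsto (fun t : ℕ => Real.exp (-(∑ j ∈ Finset.Ico (i + 1) t, a j)))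
        atTop (nhds 0) :=
      Real.tendsto_exp_atBot.comp (tendsto_neg_atTop_atBot.comp hsum_atTop)
    exact squeeze_zero (fun t => hP_nonneg i t) hupper hexp
  -- main ε-argument
  rw [Metric.tendsto_atTop]
  intro ε hε
  -- choose m with (c6/c5) * (m+1)^(-ε0) < ε/2
  have hCtend : Tendsto (fun m : ℕ => (c6 / c5) * ((m : ℝ) + 1) ^ (-ε0)) atTop (nhds 0) := by
    have h1 : Tendsto (fun m : ℕ => ((m : ℝ) + 1)) atTop atTop :=
      tendsto_atTop_add_const_right _ 1 tendsto_natCast_atTop_atTop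
    have h2 := (tendsto_rpow_neg_atTop hε0).comp h1
    simpa using h2.const_mul (c6 / c5)
  obtain ⟨m, hm⟩ := (hCtend.eventually (gt_mem_nhds (half_pos hε))).exists
  -- choose T so the head sum is < ε/2 for t ≥ T
  have hhead : Tendsto (fun t : ℕ =>
      ∑ i ∈ Finset.range m, (∏ j ∈ Finset.Ico (i + 1) t, (1 - a j)) * b i)
      atTop (nhds 0) := by
    have : Tendsto (fun t : ℕ =>
        ∑ i ∈ Finset.range m, (∏ j ∈ Finset.Ico (i + 1) t, (1 - a j)) * b i)
        atTop (nhds (∑ i ∈ Finset.range m, (0 : ℝ))) := by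
      apply tendsto_finset_sum
      intro i _
      simpa using (hPtend i).mul_const (b i)
    simpa using this
  have hhead' := (hhead.eventually (gt_mem_nhds (half_pos hε)))
  rw [eventually_atTop] at hhead'
  obtain ⟨T, hT⟩ := hhead'
  refine ⟨max T m, fun t ht => ?_⟩
  have htT : T ≤ t := le_trans (le_max_left _ _) ht
  have htm : m ≤ t := le_trans (le_max_right _ _) ht
  -- split the sum
  have hsplit : (∑ i ∈ Finset.range t, (∏ j ∈ Finset.Ico (i + 1) t, (1 - a j)) * b i)
      = (∑ i ∈ Finset.range m, (∏ j ∈ Finset.Ico (i + 1) t, (1 - a j)) * b i)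
        + ∑ i ∈ Finset.Ico m t, (∏ j ∈ Finset.Ico (i + 1) t, (1 - a j)) * b i := by
    rw [Finset.range_eq_Ico, Finset.range_eq_Ico]
    exact (Finset.sum_Ico_consecutive _ (Nat.zero_le _) htm).symm
  -- tail bound
  have htail : (∑ i ∈ Finset.Ico m t, (∏ j ∈ Finset.Ico (i + 1) t, (1 - a j)) * b i)
      ≤ (c6 / c5) * ((m : ℝ) + 1) ^ (-ε0) := by
    have hstep : ∀ i ∈ Finset.Ico m t,
        (∏ j ∈ Finset.Ico (i + 1) t, (1 - a j)) * b i
          ≤ (c6 / c5) * ((m : ℝ) + 1) ^ (-ε0)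
            * ((∏ j ∈ Finset.Ico (i + 1) t, (1 - a j)) * a i) := by
      intro i hi
      have him : m ≤ i := (Finset.mem_Ico.mp hi).1
      have hmono : ((i : ℝ) + 1) ^ (-ε0) ≤ ((m : ℝ) + 1) ^ (-ε0) := by
        rw [Real.rpow_neg (hbasepos i).le, Real.rpow_neg (hbasepos m).le]
        apply inv_anti₀ (Real.rpow_pos_of_pos (hbasepos m) _)
        apply Real.rpow_le_rpow (hbasepos m).le _ hε0.le
        have : (m : ℝ) ≤ (i : ℝ) := Nat.cast_le.mpr him
        linarith
      rw [hb_eq i]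
      have hPn := hP_nonneg i t
      have han := (ha_pos i).le
      have hC : (0:ℝ) ≤ c6 / c5 := (div_pos hc6 hc5).le
      calc (∏ j ∈ Finset.Ico (i + 1) t, (1 - a j))
            * ((c6 / c5) * ((i : ℝ) + 1) ^ (-ε0) * a i)
          ≤ (∏ j ∈ Finset.Ico (i + 1) t, (1 - a j))
            * ((c6 / c5) * ((m : ℝ) + 1) ^ (-ε0) * a i) := by
            apply mul_le_mul_of_nonneg_left _ hPn
            apply mul_le_mul_of_nonneg_right _ han
            exact mul_le_mul_of_nonneg_left hmono hC
        _ = (c6 / c5) * ((m : ℝ) + 1) ^ (-ε0)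
            * ((∏ j ∈ Finset.Ico (i + 1) t, (1 - a j)) * a i) := by ring
    calc (∑ i ∈ Finset.Ico m t, (∏ j ∈ Finset.Ico (i + 1) t, (1 - a j)) * b i)
        ≤ ∑ i ∈ Finset.Ico m t, (c6 / c5) * ((m : ℝ) + 1) ^ (-ε0)
            * ((∏ j ∈ Finset.Ico (i + 1) t, (1 - a j)) * a i) := Finset.sum_le_sum hstep
      _ = (c6 / c5) * ((m : ℝ) + 1) ^ (-ε0)
          * ∑ i ∈ Finset.Ico m t, ((∏ j ∈ Finset.Ico (i + 1) t, (1 - a j)) * a i) := by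
          rw [Finset.mul_sum]
      _ ≤ (c6 / c5) * ((m : ℝ) + 1) ^ (-ε0)
          * ∑ i ∈ Finset.range t, ((∏ j ∈ Finset.Ico (i + 1) t, (1 - a j)) * a i) := by
          apply mul_le_mul_of_nonneg_left _ (by positivity)
          apply Finset.sum_le_sum_of_subset_of_nonneg
          · rw [Finset.range_eq_Ico]
            exact Finset.Ico_subset_Ico (Nat.zero_le _) le_rfl
          · intro i _ _
            exact mul_nonneg (hP_nonneg i t) (ha_pos i).le
      _ ≤ (c6 / c5) * ((m : ℝ) + 1) ^ (-ε0) * 1 := by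
          apply mul_le_mul_of_nonneg_left (htel_le t) (by positivity)
      _ = (c6 / c5) * ((m : ℝ) + 1) ^ (-ε0) := mul_one _
  -- conclude
  have hheadt := hT t htT
  show dist (∑ i ∈ Finset.range t, (∏ j ∈ Finset.Ico (i + 1) t, (1 - a j)) * b i) 0 < ε
  rw [Real.dist_eq]
  have hhead_nonneg : (0:ℝ) ≤ ∑ i ∈ Finset.range m,
      (∏ j ∈ Finset.Ico (i + 1) t, (1 - a j)) * b i :=
    Finset.sum_nonneg fun i _ => mul_nonneg (hP_nonneg i t) (hb_pos i).le
  have hS_nonneg : (0:ℝ) ≤ ∑ i ∈ Finset.range t,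
      (∏ j ∈ Finset.Ico (i + 1) t, (1 - a j)) * b i :=
    Finset.sum_nonneg fun i _ => mul_nonneg (hP_nonneg i t) (hb_pos i).le
  have hheadlt : (∑ i ∈ Finset.range m,
      (∏ j ∈ Finset.Ico (i + 1) t, (1 - a j)) * b i) < ε / 2 := hheadt
  rw [sub_zero, abs_of_nonneg hS_nonneg]
  calc (∑ i ∈ Finset.range t, (∏ j ∈ Finset.Ico (i + 1) t, (1 - a j)) * b i)
      = (∑ i ∈ Finset.range m, (∏ j ∈ Finset.Ico (i + 1) t, (1 - a j)) * b i)
        + ∑ i ∈ Finset.Ico m t, (∏ j ∈ Finset.Ico (i + 1) t, (1 - a j)) * b i := hsplit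
    _ < ε / 2 + (c6 / c5) * ((m : ℝ) + 1) ^ (-ε0) :=
        add_lt_add_of_lt_of_le hheadlt htail
    _ < ε / 2 + ε / 2 := by linarith [hm]
    _ = ε := by ring
end
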